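/- For all integers m ≥ 1 and n ≥ 0, the number of elements of Q_5(m,n) is at most the number of elements of P_5(−m,n). -/

import Mathlib

noncomputable section

/-- The i-th largest part (1-indexed) of a partition, represented as a
multiset of parts; `0` if `i` exceeds the number of parts. -/
def partAt (mu : Multiset ℕ) (i : ℕ) : ℕ :=
  (mu.sort (· ≥ ·)).getD (i - 1) 0

/-- The smallest part of a partition, with the convention that the smallest
part of the empty partition is `+∞`. -/
def sMin (mu : Multiset ℕ) : ℕ∞ := (mu.map ((↑) : ℕ → ℕ∞)).inf

/-- Q₅(m,n): triples (j, α, β) with j ≥ 1, parts of α at most m+j, parts of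
β at most j, |α|+|β|+j(m+j) = n, β₁ = j, ℓ(β) ≥ ℓ(α)+1,
α₁ = α₂ = m+j > α₃ and s(β) ≥ 2. -/
def Q5 (m n : ℕ) : Set (ℕ × Multiset ℕ × Multiset ℕ) :=
  {x | 1 ≤ x.1 ∧ (∀ a ∈ x.2.1, 0 < a) ∧ (∀ a ∈ x.2.2, 0 < a) ∧
       (∀ a ∈ x.2.1, a ≤ m + x.1) ∧ (∀ a ∈ x.2.2, a ≤ x.1) ∧
       x.2.1.sum + x.2.2.sum + x.1 * (m + x.1) = n ∧
       partAt x.2.2 1 = x.1 ∧ Multiset.card x.2.1 + 1 ≤ Multiset.card x.2.2 ∧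
       partAt x.2.1 1 = m + x.1 ∧ partAt x.2.1 2 = m + x.1 ∧
       partAt x.2.1 3 < m + x.1 ∧ 2 ≤ sMin x.2.2}

/-- P₅(-m,n): triples (j', γ, δ) with j' ≥ 1, parts of γ at most m+j', parts
of δ at most j', |γ|+|δ|+j'(m+j') = n, ℓ(γ) = ℓ(δ), γ₁ ≤ m+j'-3 and
δ₁ = j'. -/
def P5 (m n : ℕ) : Set (ℕ × Multiset ℕ × Multiset ℕ) :=
  {x | 1 ≤ x.1 ∧ (∀ a ∈ x.2.1, 0 < a) ∧ (∀ a ∈ x.2.2, 0 < a) ∧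
       (∀ a ∈ x.2.1, a ≤ m + x.1) ∧ (∀ a ∈ x.2.2, a ≤ x.1) ∧
       x.2.1.sum + x.2.2.sum + x.1 * (m + x.1) = n ∧
       Multiset.card x.2.1 = Multiset.card x.2.2 ∧
       (partAt x.2.1 1 : ℤ) ≤ (m : ℤ) + (x.1 : ℤ) - 3 ∧
       partAt x.2.2 1 = x.1}

namespace Q5P5

/-- tail of α after removing the two largest parts -/
def Aof (x : ℕ × Multiset ℕ × Multiset ℕ) : Multiset ℕ :=
  ((x.2.1.sort (· ≥ ·)).drop 2 : List ℕ)

/-- tail of β after removing the largest part -/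
def Bof (x : ℕ × Multiset ℕ × Multiset ℕ) : Multiset ℕ :=
  ((x.2.2.sort (· ≥ ·)).drop 1 : List ℕ)

def AG (x : ℕ × Multiset ℕ × Multiset ℕ) : Multiset ℕ :=
  (Aof x).filter (fun a => x.1 < a)

def AL (x : ℕ × Multiset ℕ × Multiset ℕ) : Multiset ℕ :=
  (Aof x).filter (fun a => ¬ x.1 < a)

def KK (m : ℕ) (x : ℕ × Multiset ℕ × Multiset ℕ) : ℕ :=
  Multiset.card (Bof x) + Multiset.card (AG x) - Multiset.card (AL x)
    - (if m = 1 then 1 else if m = 2 then 2 else 0)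

def GG (m : ℕ) (x : ℕ × Multiset ℕ × Multiset ℕ) : Multiset ℕ :=
  (Bof x).map (· - 1) + (AG x).map (· - 1) + (if 3 ≤ m then {m - 2} else 0)

def DD (m : ℕ) (x : ℕ × Multiset ℕ × Multiset ℕ) : Multiset ℕ :=
  (x.1 + 1) ::ₘ ((AL x).map (· + 1) + (if m = 2 then {2} else 0)
    + Multiset.replicate (KK m x) 1)

def FF (m : ℕ) (x : ℕ × Multiset ℕ × Multiset ℕ) : ℕ × Multiset ℕ × Multiset ℕ :=
  (x.1 + 1, GG m x, DD m x)

lemma partAt_le {μ : Multiset ℕ} {v : ℕ} (h : ∀ a ∈ μ, a ≤ v) : partAt μ 1 ≤ v := by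
  unfold partAt
  rcases hl : μ.sort (· ≥ ·) with _ | ⟨a, t⟩
  · simp
  · have ha : a ∈ μ := by
      rw [← Multiset.mem_sort (· ≥ ·), hl]; exact List.mem_cons_self
    simpa using h a ha

lemma partAt_eq_max {μ : Multiset ℕ} {v : ℕ} (hv : v ∈ μ) (h : ∀ a ∈ μ, a ≤ v) :
    partAt μ 1 = v := by
  unfold partAt
  rcases hl : μ.sort (· ≥ ·) with _ | ⟨a, t⟩
  · rw [← Multiset.mem_sort (· ≥ ·), hl] at hv; simp at hv
  · have ha : a ∈ μ := by
      rw [← Multiset.mem_sort (· ≥ ·), hl]; exact List.mem_cons_self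
    have hs := Multiset.pairwise_sort μ (· ≥ ·)
    rw [hl, List.pairwise_cons] at hs
    rw [← Multiset.mem_sort (· ≥ ·), hl] at hv
    rcases List.mem_cons.mp hv with rfl | hvt
    · simp
    · have h1 : a ≥ v := hs.1 v hvt
      have h2 : a ≤ v := h a ha
      simpa using le_antisymm h2 h1

lemma sum_map_pred {s : Multiset ℕ} (h : ∀ a ∈ s, 1 ≤ a) :
    (s.map (· - 1)).sum + Multiset.card s = s.sum := by
  induction s using Multiset.induction_on with
  | empty => simp
  | cons a s ih =>
    have ha : 1 ≤ a := h a (Multiset.mem_cons_self a s)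
    have ih' := ih (fun b hb => h b (Multiset.mem_cons_of_mem hb))
    simp only [Multiset.map_cons, Multiset.sum_cons, Multiset.card_cons]
    omega

lemma sum_map_succ (s : Multiset ℕ) :
    (s.map (· + 1)).sum = s.sum + Multiset.card s := by
  induction s using Multiset.induction_on with
  | empty => simp
  | cons a s ih =>
    simp only [Multiset.map_cons, Multiset.sum_cons, Multiset.card_cons]
    omega

lemma card_le_sum {s : Multiset ℕ} (h : ∀ a ∈ s, 1 ≤ a) :
    Multiset.card s ≤ s.sum := by
  induction s using Multiset.induction_on with
  | empty => simp
  | cons a s ih =>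
    have ha : 1 ≤ a := h a (Multiset.mem_cons_self a s)
    have ih' := ih (fun b hb => h b (Multiset.mem_cons_of_mem hb))
    simp only [Multiset.sum_cons, Multiset.card_cons]
    omega

lemma le_sum_of_mem {s : Multiset ℕ} {a : ℕ} (h : a ∈ s) : a ≤ s.sum := by
  induction s using Multiset.induction_on with
  | empty => simp at h
  | cons b s ih =>
    rw [Multiset.sum_cons]
    rcases Multiset.mem_cons.mp h with rfl | h'
    · omega
    · have := ih h'; omega

lemma map_pred_cancel {s : Multiset ℕ} (h : ∀ a ∈ s, 1 ≤ a) :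
    (s.map (· - 1)).map (· + 1) = s := by
  rw [Multiset.map_map]
  have : s.map ((· + 1) ∘ (· - 1)) = s.map id :=
    Multiset.map_congr rfl (fun a ha => by have := h a ha; simp; omega)
  rw [this, Multiset.map_id]

/-- structure of elements of Q5 -/
lemma Q5_struct {m n : ℕ} (hm : 1 ≤ m) {x : ℕ × Multiset ℕ × Multiset ℕ}
    (hx : x ∈ Q5 m n) :
    2 ≤ x.1 ∧
    x.2.1 = (m + x.1) ::ₘ (m + x.1) ::ₘ Aof x ∧
    x.2.2 = x.1 ::ₘ Bof x ∧
    (∀ a ∈ Aof x, 1 ≤ a ∧ a + 1 ≤ m + x.1) ∧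
    (∀ b ∈ Bof x, 2 ≤ b ∧ b ≤ x.1) ∧
    Multiset.card (Aof x) + 2 ≤ Multiset.card (Bof x) ∧
    (Aof x).sum + 2 * (m + x.1) + ((Bof x).sum + x.1) + x.1 * (m + x.1) = n := by
  obtain ⟨hj, hapos, hbpos, hale, hble, hsum, hb1, hcard, ha1, ha2, ha3, hsmin⟩ := hx
  -- β decomposition
  have hsb := Multiset.pairwise_sort x.2.2 (· ≥ ·)
  have heb := Multiset.sort_eq x.2.2 (· ≥ ·)
  have hsa := Multiset.pairwise_sort x.2.1 (· ≥ ·)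
  have hea := Multiset.sort_eq x.2.1 (· ≥ ·)
  unfold partAt at hb1 ha1 ha2 ha3
  rcases hlb : x.2.2.sort (· ≥ ·) with _ | ⟨b0, tb⟩
  · rw [hlb] at hb1; simp at hb1; omega
  rw [hlb] at hb1 heb hsb
  simp at hb1
  subst hb1
  have hβ : x.2.2 = x.1 ::ₘ Bof x := by
    rw [← heb]; unfold Bof; rw [hlb]; simp [Multiset.cons_coe]
  -- small-part facts via sMin
  have hminB : ∀ a ∈ x.2.2, 2 ≤ a := by
    intro a ha
    have h1 : (↑a : ℕ∞) ∈ x.2.2.map ((↑) : ℕ → ℕ∞) := Multiset.mem_map_of_mem _ ha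
    have h2 := Multiset.inf_le h1
    have h3 : (2 : ℕ∞) ≤ (↑a : ℕ∞) := le_trans hsmin h2
    exact_mod_cast h3
  have hj2 : 2 ≤ x.1 := by
    have : x.1 ∈ x.2.2 := by rw [hβ]; exact Multiset.mem_cons_self _ _
    exact hminB _ this
  have hBparts : ∀ b ∈ Bof x, 2 ≤ b ∧ b ≤ x.1 := by
    intro b hb
    have hbm : b ∈ x.2.2 := by rw [hβ]; exact Multiset.mem_cons_of_mem hb
    exact ⟨hminB _ hbm, hble _ hbm⟩
  -- α decomposition
  rcases hla : x.2.1.sort (· ≥ ·) with _ | ⟨a0, ta⟩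
  · rw [hla] at ha1; simp at ha1; omega
  rcases hta : ta with _ | ⟨a1, ta2⟩
  · rw [hla, hta] at ha2; simp at ha2; omega
  rw [hla, hta] at ha1 ha2 ha3 hea hsa
  simp at ha1 ha2
  norm_num at ha3
  subst ha1
  subst ha2
  have hα : x.2.1 = (m + x.1) ::ₘ (m + x.1) ::ₘ Aof x := by
    rw [← hea]; unfold Aof; rw [hla, hta]; simp [Multiset.cons_coe]
  have hAparts : ∀ a ∈ Aof x, 1 ≤ a ∧ a + 1 ≤ m + x.1 := by
    intro a haA
    have ham : a ∈ x.2.1 := by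
      rw [hα]; exact Multiset.mem_cons_of_mem (Multiset.mem_cons_of_mem haA)
    refine ⟨hapos _ ham, ?_⟩
    -- bound via third part
    have haA0 : a ∈ (↑ta2 : Multiset ℕ) := by
      unfold Aof at haA; rw [hla, hta] at haA; exact haA
    rcases hta2 : ta2 with _ | ⟨c, tc⟩
    · rw [hta2] at haA0; simp at haA0
    · rw [hta2] at ha3 hsa haA0
      simp at ha3
      rw [List.pairwise_cons, List.pairwise_cons, List.pairwise_cons] at hsa
      have hsc := hsa.2.2
      have haA1 : a ∈ c :: tc := by exact_mod_cast haA0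
      rcases List.mem_cons.mp haA1 with rfl | hmem
      · omega
      · have : c ≥ a := hsc.1 a hmem
        omega
  -- cards
  have hcards : Multiset.card (Aof x) + 2 ≤ Multiset.card (Bof x) := by
    rw [hα, hβ] at hcard; simp at hcard; omega
  refine ⟨hj2, hα, hβ, hAparts, hBparts, hcards, ?_⟩
  rw [hα, hβ] at hsum
  simp only [Multiset.sum_cons] at hsum
  set P := x.1 * (m + x.1)
  omega

lemma FF_mem {m n : ℕ} (hm : 1 ≤ m) {x : ℕ × Multiset ℕ × Multiset ℕ}
    (hx : x ∈ Q5 m n) : FF m x ∈ P5 m n := by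
  obtain ⟨hj2, hα, hβ, hA, hB, hcards, hsum⟩ := Q5_struct hm hx
  have hsplit : AG x + AL x = Aof x := Multiset.filter_add_not _ _
  have hAG : ∀ a ∈ AG x, x.1 < a ∧ (1 ≤ a ∧ a + 1 ≤ m + x.1) := by
    intro a ha
    have h1 := Multiset.of_mem_filter ha
    have h2 := Multiset.mem_of_mem_filter ha
    exact ⟨h1, hA a h2⟩
  have hAL : ∀ a ∈ AL x, a ≤ x.1 ∧ 1 ≤ a := by
    intro a ha
    have h1 := Multiset.of_mem_filter ha
    have h2 := Multiset.mem_of_mem_filter ha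
    exact ⟨by omega, (hA a h2).1⟩
  have ecard : Multiset.card (AG x) + Multiset.card (AL x) = Multiset.card (Aof x) := by
    rw [← Multiset.card_add, hsplit]
  have esum : (AG x).sum + (AL x).sum = (Aof x).sum := by
    rw [← Multiset.sum_add, hsplit]
  have hK : KK m x + Multiset.card (AL x)
      + (if m = 1 then 1 else if m = 2 then 2 else 0)
      = Multiset.card (Bof x) + Multiset.card (AG x) := by
    unfold KK; split_ifs <;> omega
  -- part bounds for γ
  have hGle : ∀ a ∈ GG m x, a ≤ m + x.1 - 2 := by
    intro a ha
    unfold GG at ha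
    rcases Multiset.mem_add.mp ha with h | h
    · rcases Multiset.mem_add.mp h with h' | h'
      · obtain ⟨b, hb, rfl⟩ := Multiset.mem_map.mp h'
        have := hB b hb; omega
      · obtain ⟨b, hb, rfl⟩ := Multiset.mem_map.mp h'
        have := hAG b hb; omega
    · split_ifs at h with h3
      · rw [Multiset.mem_singleton] at h; omega
      · simp at h
  have hGpos : ∀ a ∈ GG m x, 0 < a := by
    intro a ha
    unfold GG at ha
    rcases Multiset.mem_add.mp ha with h | h
    · rcases Multiset.mem_add.mp h with h' | h'
      · obtain ⟨b, hb, rfl⟩ := Multiset.mem_map.mp h'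
        have := hB b hb; omega
      · obtain ⟨b, hb, rfl⟩ := Multiset.mem_map.mp h'
        have := hAG b hb; omega
    · split_ifs at h with h3
      · rw [Multiset.mem_singleton] at h; omega
      · simp at h
  have hDle : ∀ a ∈ DD m x, a ≤ x.1 + 1 := by
    intro a ha
    unfold DD at ha
    rcases Multiset.mem_cons.mp ha with rfl | h
    · omega
    · rcases Multiset.mem_add.mp h with h' | h'
      · rcases Multiset.mem_add.mp h' with h'' | h''
        · obtain ⟨b, hb, rfl⟩ := Multiset.mem_map.mp h''
          have := hAL b hb; omega
        · split_ifs at h'' with h2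
          · rw [Multiset.mem_singleton] at h''; omega
          · simp at h''
      · have := Multiset.eq_of_mem_replicate h'; omega
  have hDpos : ∀ a ∈ DD m x, 0 < a := by
    intro a ha
    unfold DD at ha
    rcases Multiset.mem_cons.mp ha with rfl | h
    · omega
    · rcases Multiset.mem_add.mp h with h' | h'
      · rcases Multiset.mem_add.mp h' with h'' | h''
        · obtain ⟨b, hb, rfl⟩ := Multiset.mem_map.mp h''
          omega
        · split_ifs at h'' with h2
          · rw [Multiset.mem_singleton] at h''; omega
          · simp at h''
      · have := Multiset.eq_of_mem_replicate h'; omega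
  -- sums
  have eB : ((Bof x).map (· - 1)).sum + Multiset.card (Bof x) = (Bof x).sum :=
    sum_map_pred (fun b hb => by have := hB b hb; omega)
  have eAG : ((AG x).map (· - 1)).sum + Multiset.card (AG x) = (AG x).sum :=
    sum_map_pred (fun b hb => by have := hAG b hb; omega)
  have eAL : ((AL x).map (· + 1)).sum = (AL x).sum + Multiset.card (AL x) :=
    sum_map_succ _
  have hG : (GG m x).sum = ((Bof x).map (· - 1)).sum + ((AG x).map (· - 1)).sum
      + (if 3 ≤ m then m - 2 else 0) := by
    unfold GG
    rw [Multiset.sum_add, Multiset.sum_add]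
    congr 1
    split_ifs <;> simp
  have hD : (DD m x).sum = (x.1 + 1) + (((AL x).map (· + 1)).sum
      + (if m = 2 then 2 else 0) + KK m x) := by
    unfold DD
    rw [Multiset.sum_cons, Multiset.sum_add, Multiset.sum_add,
      Multiset.sum_replicate]
    congr 2
    · split_ifs <;> simp
    · simp
  have hGc : Multiset.card (GG m x) = Multiset.card (Bof x) + Multiset.card (AG x)
      + (if 3 ≤ m then 1 else 0) := by
    unfold GG
    rw [Multiset.card_add, Multiset.card_add, Multiset.card_map, Multiset.card_map]
    congr 1
    split_ifs <;> simp
  have hDc : Multiset.card (DD m x) = 1 + (Multiset.card (AL x)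
      + (if m = 2 then 1 else 0) + KK m x) := by
    have hifc : Multiset.card (if m = 2 then ({2} : Multiset ℕ) else 0)
        = (if m = 2 then 1 else 0) := by split_ifs <;> simp
    unfold DD
    rw [Multiset.card_cons, Multiset.card_add, Multiset.card_add,
      Multiset.card_map, Multiset.card_replicate, hifc]
    omega
  have hmul : (x.1 + 1) * (m + (x.1 + 1)) = x.1 * (m + x.1) + m + 2 * x.1 + 1 := by
    ring
  refine ⟨show 1 ≤ x.1 + 1 by omega, hGpos, hDpos, ?_, hDle, ?_, ?_, ?_, ?_⟩
  · intro a ha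
    have := hGle a ha
    show a ≤ m + (x.1 + 1)
    omega
  · -- sum equation
    show (GG m x).sum + (DD m x).sum + (x.1 + 1) * (m + (x.1 + 1)) = n
    rw [hG, hD, hmul]
    have hc : m = 1 ∨ m = 2 ∨ 3 ≤ m := by omega
    rcases hc with rfl | rfl | h3
    · norm_num at hK ⊢; omega
    · norm_num at hK ⊢; omega
    · rw [if_neg (show ¬ m = 1 by omega), if_neg (show ¬ m = 2 by omega)] at hK
      rw [if_pos h3, if_neg (show ¬ m = 2 by omega)]
      omega
  · -- card equation
    show Multiset.card (GG m x) = Multiset.card (DD m x)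
    rw [hGc, hDc]
    have hc : m = 1 ∨ m = 2 ∨ 3 ≤ m := by omega
    rcases hc with rfl | rfl | h3
    · norm_num at hK ⊢; omega
    · norm_num at hK ⊢; omega
    · rw [if_neg (show ¬ m = 1 by omega), if_neg (show ¬ m = 2 by omega)] at hK
      rw [if_pos h3, if_neg (show ¬ m = 2 by omega)]
      omega
  · -- largest part of γ
    show ((partAt (GG m x) 1 : ℕ) : ℤ) ≤ (m : ℤ) + ((x.1 + 1 : ℕ) : ℤ) - 3
    have hb := partAt_le hGle
    push_cast
    omega
  · -- largest part of δ
    show partAt (DD m x) 1 = x.1 + 1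
    exact partAt_eq_max (Multiset.mem_cons_self _ _) hDle

lemma FF_injOn {m n : ℕ} (hm : 1 ≤ m) : Set.InjOn (FF m) (Q5 m n) := by
  rintro ⟨j, α, β⟩ hx ⟨j', α', β'⟩ hy hxy
  obtain ⟨hj2x, hαx, hβx, hAx, hBx, -, -⟩ := Q5_struct hm hx
  obtain ⟨hj2y, hαy, hβy, hAy, hBy, -, -⟩ := Q5_struct hm hy
  unfold FF at hxy
  rw [Prod.mk.injEq, Prod.mk.injEq] at hxy
  obtain ⟨h1, hG, hD⟩ := hxy
  have hj : j = j' := by simpa using h1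
  subst hj
  set x : ℕ × Multiset ℕ × Multiset ℕ := (j, α, β) with hxdef
  set y : ℕ × Multiset ℕ × Multiset ℕ := (j, α', β') with hydef
  -- δ side
  unfold DD at hD
  have hD1 := (Multiset.cons_inj_right _).mp hD
  have hcnt := congrArg (Multiset.count 1) hD1
  have hALmap1 : ∀ (z : ℕ × Multiset ℕ × Multiset ℕ),
      (∀ a ∈ Aof z, 1 ≤ a ∧ a + 1 ≤ m + z.1) →
      Multiset.count 1 ((AL z).map (· + 1)) = 0 := by
    intro z hz
    rw [Multiset.count_eq_zero]
    intro hmem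
    obtain ⟨b, hb, hb1⟩ := Multiset.mem_map.mp hmem
    have := (hz b (Multiset.mem_of_mem_filter hb)).1
    omega
  have hcnt2 : Multiset.count 1 (if m = 2 then ({2} : Multiset ℕ) else 0) = 0 := by
    split_ifs <;> simp
  rw [Multiset.count_add, Multiset.count_add, Multiset.count_add,
    Multiset.count_add, hALmap1 x hAx, hALmap1 y hAy, hcnt2,
    Multiset.count_replicate, Multiset.count_replicate] at hcnt
  norm_num at hcnt
  have hKeq : KK m x = KK m y := by omega
  rw [hKeq] at hD1
  have hD2 : (AL x).map (· + 1) + (if m = 2 then ({2} : Multiset ℕ) else 0)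
      = (AL y).map (· + 1) + (if m = 2 then ({2} : Multiset ℕ) else 0) :=
    add_right_cancel hD1
  have hD3 : (AL x).map (· + 1) = (AL y).map (· + 1) := add_right_cancel hD2
  have hALeq : AL x = AL y :=
    Multiset.map_injective (fun a b hab => by omega) hD3
  -- γ side
  unfold GG at hG
  have hG1 : (Bof x).map (· - 1) + (AG x).map (· - 1)
      = (Bof y).map (· - 1) + (AG y).map (· - 1) := add_right_cancel hG
  have hfilt : ∀ (z : ℕ × Multiset ℕ × Multiset ℕ),
      (∀ a ∈ Aof z, 1 ≤ a ∧ a + 1 ≤ m + z.1) →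
      (∀ b ∈ Bof z, 2 ≤ b ∧ b ≤ z.1) →
      ((Bof z).map (· - 1) + (AG z).map (· - 1)).filter (fun v => z.1 ≤ v)
        = (AG z).map (· - 1) := by
    intro z hz hbz
    rw [Multiset.filter_add]
    have e1 : ((Bof z).map (· - 1)).filter (fun v => z.1 ≤ v) = 0 := by
      rw [Multiset.filter_eq_nil]
      intro a ha
      obtain ⟨b, hb, rfl⟩ := Multiset.mem_map.mp ha
      have := hbz b hb
      omega
    have e2 : ((AG z).map (· - 1)).filter (fun v => z.1 ≤ v)
        = (AG z).map (· - 1) := by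
      rw [Multiset.filter_eq_self]
      intro a ha
      obtain ⟨b, hb, rfl⟩ := Multiset.mem_map.mp ha
      have h1 := Multiset.of_mem_filter hb
      omega
    rw [e1, e2, zero_add]
  have hfilt' : ∀ (z : ℕ × Multiset ℕ × Multiset ℕ),
      (∀ a ∈ Aof z, 1 ≤ a ∧ a + 1 ≤ m + z.1) →
      (∀ b ∈ Bof z, 2 ≤ b ∧ b ≤ z.1) →
      ((Bof z).map (· - 1) + (AG z).map (· - 1)).filter (fun v => ¬ z.1 ≤ v)
        = (Bof z).map (· - 1) := by
    intro z hz hbz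
    rw [Multiset.filter_add]
    have e1 : ((Bof z).map (· - 1)).filter (fun v => ¬ z.1 ≤ v)
        = (Bof z).map (· - 1) := by
      rw [Multiset.filter_eq_self]
      intro a ha
      obtain ⟨b, hb, rfl⟩ := Multiset.mem_map.mp ha
      have := hbz b hb
      omega
    have e2 : ((AG z).map (· - 1)).filter (fun v => ¬ z.1 ≤ v) = 0 := by
      rw [Multiset.filter_eq_nil]
      intro a ha
      obtain ⟨b, hb, rfl⟩ := Multiset.mem_map.mp ha
      have h1 := Multiset.of_mem_filter hb
      omega
    rw [e1, e2, add_zero]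
  have hAGmap : (AG x).map (· - 1) = (AG y).map (· - 1) := by
    rw [← hfilt x hAx hBx, ← hfilt y hAy hBy, hG1]
  have hBmap : (Bof x).map (· - 1) = (Bof y).map (· - 1) := by
    rw [← hfilt' x hAx hBx, ← hfilt' y hAy hBy, hG1]
  have hAGeq : AG x = AG y := by
    have hx1 : ((AG x).map (· - 1)).map (· + 1) = AG x :=
      map_pred_cancel (fun a ha => by
        have := (hAx a (Multiset.mem_of_mem_filter ha)).1; omega)
    have hy1 : ((AG y).map (· - 1)).map (· + 1) = AG y :=
      map_pred_cancel (fun a ha => by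
        have := (hAy a (Multiset.mem_of_mem_filter ha)).1; omega)
    rw [← hx1, ← hy1, hAGmap]
  have hBeq : Bof x = Bof y := by
    have hx1 : ((Bof x).map (· - 1)).map (· + 1) = Bof x :=
      map_pred_cancel (fun a ha => by have := (hBx a ha).1; omega)
    have hy1 : ((Bof y).map (· - 1)).map (· + 1) = Bof y :=
      map_pred_cancel (fun a ha => by have := (hBy a ha).1; omega)
    rw [← hx1, ← hy1, hBmap]
  have hAeq : Aof x = Aof y := by
    rw [← Multiset.filter_add_not (fun a => x.1 < a) (Aof x),
      ← Multiset.filter_add_not (fun a => y.1 < a) (Aof y)]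
    exact congrArg₂ (· + ·) hAGeq hALeq
  have hαeq : α = α' := by
    have h1 : x.2.1 = y.2.1 := by rw [hαx, hαy, hAeq]
    exact h1
  have hβeq : β = β' := by
    have h1 : x.2.2 = y.2.2 := by rw [hβx, hβy, hBeq]
    exact h1
  rw [Prod.mk.injEq, Prod.mk.injEq]
  exact ⟨rfl, hαeq, hβeq⟩

lemma bounded_multiset_mem (n : ℕ) {s : Multiset ℕ} (hpos : ∀ a ∈ s, 0 < a)
    (hsum : s.sum ≤ n) :
    s ∈ (n • (Finset.range (n + 1)).val).powerset.toFinset := by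
  rw [Multiset.mem_toFinset, Multiset.mem_powerset, Multiset.le_iff_count]
  intro a
  rw [Multiset.count_nsmul]
  by_cases ha : a < n + 1
  · have h1 : Multiset.count a (Finset.range (n + 1)).val = 1 :=
      Multiset.count_eq_one_of_mem (Finset.range (n + 1)).nodup
        (Finset.mem_range.mpr ha)
    rw [h1, mul_one]
    calc Multiset.count a s ≤ Multiset.card s := Multiset.count_le_card a s
    _ ≤ s.sum := card_le_sum (fun b hb => hpos b hb)
    _ ≤ n := hsum
  · have h0 : Multiset.count a s = 0 := by
      rw [Multiset.count_eq_zero]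
      intro hmem
      have := le_sum_of_mem hmem
      omega
    rw [h0]
    omega

lemma P5_finite (m n : ℕ) : (P5 m n).Finite := by
  apply Set.Finite.subset (Set.finite_mem_finset
    ((Finset.range (n + 1)) ×ˢ
      (((n • (Finset.range (n + 1)).val).powerset.toFinset) ×ˢ
        ((n • (Finset.range (n + 1)).val).powerset.toFinset))))
  rintro ⟨j, γ, δ⟩ hx
  obtain ⟨hj, hgpos, hdpos, -, -, hsum, -, -, -⟩ := hx
  dsimp only at hj hgpos hdpos hsum
  simp only [Set.mem_setOf_eq, Finset.mem_product]
  have hjm : j ≤ j * (m + j) := Nat.le_mul_of_pos_right j (by omega)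
  refine ⟨Finset.mem_range.mpr (by omega), ?_, ?_⟩
  · exact bounded_multiset_mem n hgpos (by omega)
  · exact bounded_multiset_mem n hdpos (by omega)

end Q5P5

/-- For all integers m ≥ 1 and n ≥ 0, #Q₅(m,n) ≤ #P₅(-m,n). -/
theorem Q5_card_le_P5_card (m n : ℕ) (hm : 1 ≤ m) :
    Nat.card (Q5 m n) ≤ Nat.card (P5 m n) := by
  rw [Nat.card_coe_set_eq, Nat.card_coe_set_eq]
  exact Set.ncard_le_ncard_of_injOn (Q5P5.FF m)
    (fun x hx => Q5P5.FF_mem hm hx) (Q5P5.FF_injOn hm) (Q5P5.P5_finite m n)
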